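/- Let (x,y) be uniformly distributed on the square [-D/2, D/2] × [-D/2, D/2] and let Z = x² + y² + d². Then for d² + D²/4 ≤ z < d² + D²/2, the CDF of Z is F_Z(z) = (2D√(z - d² - D²/4) + 4(z - d²)·arcsin(D/(2√(z - d²))) - π(z - d²))/D². -/

import Mathlib

open MeasureTheory Set Real intervalIntegral

noncomputable def Fanti (r2 x : ℝ) : ℝ :=
  (x * Real.sqrt (r2 - x ^ 2) + r2 * Real.arcsin (x / Real.sqrt r2)) / 2

lemma Fanti_neg (r2 x : ℝ) : Fanti r2 (-x) = -Fanti r2 x := by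
  simp [Fanti, neg_sq, neg_div, Real.arcsin_neg]
  ring

lemma hasDeriv_Fanti (r2 x : ℝ) (hr2 : 0 < r2) (hx : x ^ 2 < r2) :
    HasDerivAt (Fanti r2) (Real.sqrt (r2 - x ^ 2)) x := by
  have hw : 0 < r2 - x ^ 2 := by linarith
  have hsw : 0 < Real.sqrt (r2 - x ^ 2) := Real.sqrt_pos.mpr hw
  have hr : 0 < Real.sqrt r2 := Real.sqrt_pos.mpr hr2
  have hrr : Real.sqrt r2 ^ 2 = r2 := Real.sq_sqrt hr2.le
  have hxr : |x / Real.sqrt r2| < 1 := by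
    rw [abs_div, abs_of_pos hr, div_lt_one hr, ← Real.sqrt_sq_eq_abs]
    exact Real.sqrt_lt_sqrt (sq_nonneg x) hx
  have h1 : HasDerivAt (fun x : ℝ => r2 - x ^ 2) (-(2 * x)) x := by
    simpa using ((hasDerivAt_pow 2 x).const_sub r2)
  have h2 : HasDerivAt (fun x : ℝ => Real.sqrt (r2 - x ^ 2))
      (-(2 * x) / (2 * Real.sqrt (r2 - x ^ 2))) x := h1.sqrt hw.ne'
  have h3 : HasDerivAt (fun x : ℝ => x * Real.sqrt (r2 - x ^ 2))
      (1 * Real.sqrt (r2 - x ^ 2) + x * (-(2 * x) / (2 * Real.sqrt (r2 - x ^ 2)))) x :=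
    (hasDerivAt_id x).mul h2
  have harc := Real.hasDerivAt_arcsin (abs_lt.mp hxr).1.ne' (abs_lt.mp hxr).2.ne
  have hdiv : HasDerivAt (fun y : ℝ => y / Real.sqrt r2) (1 / Real.sqrt r2) x := by
    simpa using (hasDerivAt_id x).div_const (Real.sqrt r2)
  have h4 : HasDerivAt (fun x : ℝ => Real.arcsin (x / Real.sqrt r2))
      (1 / Real.sqrt (1 - (x / Real.sqrt r2) ^ 2) * (1 / Real.sqrt r2)) x := by
    have h := harc.comp x hdiv
    exact h
  have hone : Real.sqrt (1 - (x / Real.sqrt r2) ^ 2)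
      = Real.sqrt (r2 - x ^ 2) / Real.sqrt r2 := by
    have e : 1 - (x / Real.sqrt r2) ^ 2 = (r2 - x ^ 2) / r2 := by
      rw [div_pow, hrr]; field_simp
    rw [e, Real.sqrt_div hw.le]
  have htot := h3.add (h4.const_mul r2)
  have hsq : Real.sqrt (r2 - x ^ 2) * Real.sqrt (r2 - x ^ 2) = r2 - x ^ 2 :=
    Real.mul_self_sqrt hw.le
  have hkey : (1 * Real.sqrt (r2 - x ^ 2) + x * (-(2 * x) / (2 * Real.sqrt (r2 - x ^ 2))))
      + r2 * (1 / Real.sqrt (1 - (x / Real.sqrt r2) ^ 2) * (1 / Real.sqrt r2))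
      = 2 * Real.sqrt (r2 - x ^ 2) := by
    rw [hone]
    have e2 : 1 / (Real.sqrt (r2 - x ^ 2) / Real.sqrt r2) * (1 / Real.sqrt r2)
        = 1 / Real.sqrt (r2 - x ^ 2) := by
      field_simp
    rw [e2, one_mul]
    field_simp
    nlinarith [hsq, hsw]
  rw [hkey] at htot
  have := htot.div_const 2
  unfold Fanti
  simpa [Fanti, mul_comm, mul_div_assoc] using this

lemma integral_sqrt_seg (r2 p q : ℝ) (hr2 : 0 < r2) (hp : -Real.sqrt r2 ≤ p) (hpq : p ≤ q)
    (hq : q ≤ Real.sqrt r2) :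
    ∫ x in p..q, Real.sqrt (r2 - x ^ 2) = Fanti r2 q - Fanti r2 p := by
  have hcont : ContinuousOn (Fanti r2) (Icc p q) := by
    apply Continuous.continuousOn
    unfold Fanti
    exact ((continuous_id.mul ((continuous_const.sub (continuous_pow 2)).sqrt)).add
      (continuous_const.mul (Real.continuous_arcsin.comp
        (continuous_id.div_const _)))).div_const 2
  have hderiv : ∀ x ∈ Ioo p q, HasDerivWithinAt (Fanti r2)
      (Real.sqrt (r2 - x ^ 2)) (Ioi x) x := by
    intro x hx
    have hx2 : x ^ 2 < r2 := by
      have h1 : -Real.sqrt r2 < x := lt_of_le_of_lt hp hx.1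
      have h2 : x < Real.sqrt r2 := lt_of_lt_of_le hx.2 hq
      have : |x| < Real.sqrt r2 := abs_lt.mpr ⟨h1, h2⟩
      calc x ^ 2 = |x| ^ 2 := (sq_abs x).symm
        _ < Real.sqrt r2 ^ 2 := by gcongr
        _ = r2 := Real.sq_sqrt hr2.le
    exact (hasDeriv_Fanti r2 x hr2 hx2).hasDerivWithinAt
  exact integral_eq_sub_of_hasDeriv_right_of_le hpq hcont hderiv
    ((Continuous.intervalIntegrable (by fun_prop) p q))

lemma volume_to_integral (D d z : ℝ) (hD : 0 < D) (r2 : ℝ) (hr2 : r2 = z - d ^ 2)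
    (hr2lb : D ^ 2 / 4 ≤ r2) :
    (volume {p : ℝ × ℝ | p.1 ∈ Icc (-(D / 2)) (D / 2) ∧ p.2 ∈ Icc (-(D / 2)) (D / 2) ∧
        p.1 ^ 2 + p.2 ^ 2 + d ^ 2 ≤ z}).toReal
    = ∫ x in Icc (-(D / 2)) (D / 2), 2 * min (D / 2) (Real.sqrt (r2 - x ^ 2)) := by
  set m : ℝ → ℝ := fun x => min (D / 2) (Real.sqrt (r2 - x ^ 2)) with hm
  have hmcont : Continuous m := by
    apply continuous_const.min
    exact (continuous_const.sub (continuous_pow 2)).sqrt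
  have hm0 : ∀ x, 0 ≤ m x := fun x => le_min (by linarith) (Real.sqrt_nonneg _)
  set S : Set (ℝ × ℝ) := {p : ℝ × ℝ | p.1 ∈ Icc (-(D / 2)) (D / 2) ∧
      p.2 ∈ Icc (-(D / 2)) (D / 2) ∧ p.1 ^ 2 + p.2 ^ 2 + d ^ 2 ≤ z} with hS
  have hSmeas : MeasurableSet S := by
    apply MeasurableSet.inter
    · exact (measurableSet_Icc.preimage measurable_fst)
    apply MeasurableSet.inter
    · exact (measurableSet_Icc.preimage measurable_snd)
    · exact measurableSet_le (((measurable_fst.pow_const 2).add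
        (measurable_snd.pow_const 2)).add_const (d ^ 2)) measurable_const
  have hslice : ∀ x : ℝ, volume (Prod.mk x ⁻¹' S)
      = (Icc (-(D / 2)) (D / 2)).indicator (fun x => ENNReal.ofReal (2 * m x)) x := by
    intro x
    rw [indicator_apply]
    split_ifs with hx
    · have : Prod.mk x ⁻¹' S = Icc (-(m x)) (m x) := by
        ext y
        simp only [hS, mem_preimage, mem_setOf_eq, mem_Icc]
        have hw : 0 ≤ r2 - x ^ 2 := by
          have := hx
          simp only [mem_Icc] at this
          nlinarith [this.1, this.2]
        constructor
        · rintro ⟨-, ⟨hy1, hy2⟩, hyz⟩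
          have hys : y ^ 2 ≤ r2 - x ^ 2 := by rw [hr2] at *; nlinarith
          have habs : |y| ≤ Real.sqrt (r2 - x ^ 2) := by
            rw [← Real.sqrt_sq_eq_abs]
            exact Real.sqrt_le_sqrt hys
          have habs2 : |y| ≤ m x := le_min (abs_le.mpr ⟨hy1, hy2⟩) habs
          exact ⟨neg_le_of_abs_le habs2, le_of_abs_le habs2⟩
        · rintro ⟨hy1, hy2⟩
          have habs : |y| ≤ m x := abs_le.mpr ⟨hy1, hy2⟩
          have h1 : |y| ≤ D / 2 := le_trans habs (min_le_left _ _)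
          have h2 : |y| ≤ Real.sqrt (r2 - x ^ 2) := le_trans habs (min_le_right _ _)
          have hys : y ^ 2 ≤ r2 - x ^ 2 := by
            nlinarith [abs_nonneg y, sq_abs y,
              mul_self_le_mul_self (abs_nonneg y) h2,
              Real.mul_self_sqrt hw]
          refine ⟨hx, ⟨neg_le_of_abs_le h1, le_of_abs_le h1⟩, ?_⟩
          rw [hr2] at hys; nlinarith
      rw [this, Real.volume_Icc]
      congr 1
      ring
    · have : Prod.mk x ⁻¹' S = ∅ := by
        ext y
        simp only [hS, mem_preimage, mem_setOf_eq, mem_empty_iff_false, iff_false]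
        rintro ⟨h, -, -⟩
        exact hx h
      simp [this]
  rw [Measure.volume_eq_prod, Measure.prod_apply hSmeas]
  simp_rw [hslice]
  rw [lintegral_indicator measurableSet_Icc]
  rw [← MeasureTheory.ofReal_integral_eq_lintegral_ofReal
    (show IntegrableOn (fun x => 2 * m x) (Icc (-(D / 2)) (D / 2)) volume from
      (continuous_const.mul hmcont).integrableOn_Icc)
    (Filter.Eventually.of_forall fun x => by positivity)]
  rw [ENNReal.toReal_ofReal]
  exact setIntegral_nonneg measurableSet_Icc fun x _ => by positivity

lemma integral_min_eval (D r2 : ℝ) (hD : 0 < D) (hr2lb : D ^ 2 / 4 ≤ r2)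
    (hr2ub : r2 < D ^ 2 / 2) :
    ∫ x in Icc (-(D / 2)) (D / 2), 2 * min (D / 2) (Real.sqrt (r2 - x ^ 2))
    = 2 * D * Real.sqrt (r2 - D ^ 2 / 4)
      + 4 * r2 * Real.arcsin (D / (2 * Real.sqrt r2)) - π * r2 := by
  have hr2pos : 0 < r2 := lt_of_lt_of_le (by positivity) hr2lb
  set a : ℝ := Real.sqrt (r2 - D ^ 2 / 4) with hadef
  have ha0 : 0 ≤ a := Real.sqrt_nonneg _
  have ha2 : a ^ 2 = r2 - D ^ 2 / 4 := Real.sq_sqrt (by linarith)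
  have hDhalf : Real.sqrt (D ^ 2 / 4) = D / 2 := by
    rw [show D ^ 2 / 4 = (D / 2) ^ 2 by ring, Real.sqrt_sq (by linarith)]
  have haD : a ≤ D / 2 := by
    rw [hadef, ← hDhalf]; exact Real.sqrt_le_sqrt (by linarith)
  have hDr : D / 2 ≤ Real.sqrt r2 := by
    rw [← hDhalf]; exact Real.sqrt_le_sqrt (by linarith)
  have hrpos : 0 < Real.sqrt r2 := Real.sqrt_pos.mpr hr2pos
  have hrr : Real.sqrt r2 ^ 2 = r2 := Real.sq_sqrt hr2pos.le
  set g : ℝ → ℝ := fun x => 2 * min (D / 2) (Real.sqrt (r2 - x ^ 2)) with hg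
  have hgc : Continuous g :=
    continuous_const.mul (continuous_const.min ((continuous_const.sub (continuous_pow 2)).sqrt))
  rw [MeasureTheory.integral_Icc_eq_integral_Ioc,
    ← intervalIntegral.integral_of_le (by linarith : -(D / 2) ≤ D / 2)]
  have hsplit : ∫ x in (-(D / 2))..(D / 2), g x
      = (∫ x in (-(D / 2))..(-a), g x) + (∫ x in (-a)..a, g x) + ∫ x in a..(D / 2), g x := by
    rw [integral_add_adjacent_intervals (hgc.intervalIntegrable _ _) (hgc.intervalIntegrable _ _),
      integral_add_adjacent_intervals (hgc.intervalIntegrable _ _) (hgc.intervalIntegrable _ _)]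
  rw [hsplit]
  have hmid : ∫ x in (-a)..a, g x = 2 * a * D := by
    rw [intervalIntegral.integral_congr (g := fun _ => D) ?_]
    · rw [intervalIntegral.integral_const, smul_eq_mul]; ring
    · intro x hx
      rw [uIcc_of_le (by linarith)] at hx
      have hxa : x ^ 2 ≤ a ^ 2 := by
        rw [mem_Icc] at hx; nlinarith [hx.1, hx.2]
      have : D / 2 ≤ Real.sqrt (r2 - x ^ 2) := by
        rw [← hDhalf]; apply Real.sqrt_le_sqrt; nlinarith [ha2]
      simp only [hg, min_eq_left this]
      ring
  have hright : ∫ x in a..(D / 2), g x = 2 * (Fanti r2 (D / 2) - Fanti r2 a) := by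
    have : ∀ x ∈ uIcc a (D / 2), g x = 2 * Real.sqrt (r2 - x ^ 2) := by
      intro x hx
      rw [uIcc_of_le haD, mem_Icc] at hx
      have hxa : a ^ 2 ≤ x ^ 2 := by nlinarith [hx.1, hx.2]
      have : Real.sqrt (r2 - x ^ 2) ≤ D / 2 := by
        rw [← hDhalf]; apply Real.sqrt_le_sqrt; nlinarith [ha2]
      simp [hg, min_eq_right this]
    rw [intervalIntegral.integral_congr this, intervalIntegral.integral_const_mul,
      integral_sqrt_seg r2 a (D / 2) hr2pos (by linarith) haD hDr]
  have hleft : ∫ x in (-(D / 2))..(-a), g x = 2 * (Fanti r2 (D / 2) - Fanti r2 a) := by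
    have : ∀ x ∈ uIcc (-(D / 2)) (-a), g x = 2 * Real.sqrt (r2 - x ^ 2) := by
      intro x hx
      rw [uIcc_of_le (by linarith), mem_Icc] at hx
      have hxa : a ^ 2 ≤ x ^ 2 := by nlinarith [hx.1, hx.2]
      have : Real.sqrt (r2 - x ^ 2) ≤ D / 2 := by
        rw [← hDhalf]; apply Real.sqrt_le_sqrt; nlinarith [ha2]
      simp [hg, min_eq_right this]
    rw [intervalIntegral.integral_congr this, intervalIntegral.integral_const_mul,
      integral_sqrt_seg r2 (-(D / 2)) (-a) hr2pos (by linarith) (by linarith) (by linarith),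
      Fanti_neg, Fanti_neg]
    ring
  rw [hmid, hright, hleft]
  have hFD : Fanti r2 (D / 2) = (D * a / 2 + r2 * Real.arcsin (D / (2 * Real.sqrt r2))) / 2 := by
    unfold Fanti
    rw [show r2 - (D / 2) ^ 2 = r2 - D ^ 2 / 4 by ring, ← hadef]
    rw [show D / 2 / Real.sqrt r2 = D / (2 * Real.sqrt r2) by ring]
    ring
  have harcs : Real.arcsin (a / Real.sqrt r2)
      = π / 2 - Real.arcsin (D / (2 * Real.sqrt r2)) := by
    set t : ℝ := D / (2 * Real.sqrt r2) with ht
    have ht0 : 0 ≤ t := by positivity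
    have ht1 : t ≤ 1 := by
      rw [ht, div_le_one (by positivity)]; linarith
    have hat : a / Real.sqrt r2 = Real.sqrt (1 - t ^ 2) := by
      rw [hadef, ← Real.sqrt_div (by linarith) r2, ← hrr]
      congr 1
      rw [ht]
      field_simp
      ring
    rw [hat, ← Real.cos_arcsin, ← Real.sin_pi_div_two_sub,
      Real.arcsin_sin (by linarith [Real.arcsin_le_pi_div_two t, Real.arcsin_nonneg.mpr ht0])
        (by linarith [Real.arcsin_nonneg.mpr ht0])]
  have hFa : Fanti r2 a = (a * D / 2 + r2 * (π / 2 - Real.arcsin (D / (2 * Real.sqrt r2)))) / 2 := by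
    unfold Fanti
    rw [show r2 - a ^ 2 = D ^ 2 / 4 by rw [ha2]; ring, hDhalf, harcs]
    ring
  rw [hFD, hFa]
  ring

theorem stmt_1 (D d z : ℝ) (hD : 0 < D) (hd : 0 ≤ d)
    (h1 : d ^ 2 + D ^ 2 / 4 ≤ z) (h2 : z < d ^ 2 + D ^ 2 / 2) :
    (volume {p : ℝ × ℝ | p.1 ∈ Icc (-(D / 2)) (D / 2) ∧ p.2 ∈ Icc (-(D / 2)) (D / 2) ∧
        p.1 ^ 2 + p.2 ^ 2 + d ^ 2 ≤ z}).toReal / D ^ 2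
      = (2 * D * Real.sqrt (z - d ^ 2 - D ^ 2 / 4)
          + 4 * (z - d ^ 2) * Real.arcsin (D / (2 * Real.sqrt (z - d ^ 2)))
          - π * (z - d ^ 2)) / D ^ 2 := by
  have hr2lb : D ^ 2 / 4 ≤ z - d ^ 2 := by linarith
  have hr2ub : z - d ^ 2 < D ^ 2 / 2 := by linarith
  rw [volume_to_integral D d z hD (z - d ^ 2) rfl hr2lb,
    integral_min_eval D (z - d ^ 2) hD hr2lb hr2ub,
    show z - d ^ 2 - D ^ 2 / 4 = (z - d ^ 2) - D ^ 2 / 4 by ring]
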